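/- For every natural number n ≥ 1 the q-binomial (q-Chu–Vandermonde) identity (Z·Y; X)_n = ∑_{j=0}^{n} binom(n,j)_X · Z^{j} · (Z; X)_{n−j} · (Y; X)_{j} holds as an identity of polynomials in ℤ[X,Y,Z]. -/
import Mathlib


/-!
STATEMENT 3: the q-binomial (q-Chu–Vandermonde) theorem
`(ZY;X)_n = ∑_{j=0}^n binom(n,j)_X · Z^j · (Z;X)_{n-j} · (Y;X)_j`
with integer coefficients.  Since the Gaussian binomial `binom(n,j)_X` is defined as a
quotient of q-factorials, we state the identity in the fraction field of `ℤ[X,Y,Z]`;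
equality there of these (polynomial) expressions is equivalent to the identity in `ℤ[X,Y,Z]`.
-/

noncomputable section

open scoped Classical

/-- The Pochhammer symbol `(A; X)_k = ∏_{i=0}^{k-1} (1 - A·X^i)`. -/
def qPoch {F : Type*} [CommRing F] (A X : F) (k : ℕ) : F :=
  ∏ i ∈ Finset.range k, (1 - A * X ^ i)

/-- `(N)_X! = ∏_{k=1}^{N} (1 - X^k)`, with `(0)_X! = 1`. -/
def qFact {F : Type*} [CommRing F] (X : F) (N : ℕ) : F :=
  ∏ k ∈ Finset.range N, (1 - X ^ (k + 1))

/-- The Gaussian binomial `binom(a,b)_X = (a)_X! / ((a-b)_X! · (b)_X!)`. -/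
def qBinom {F : Type*} [Field F] (X : F) (a b : ℕ) : F :=
  qFact X a / (qFact X (a - b) * qFact X b)

/-- The fraction field of ℤ[X,Y,Z]. -/
abbrev F3 : Type := FractionRing (MvPolynomial (Fin 3) ℤ)

def XX : F3 := algebraMap (MvPolynomial (Fin 3) ℤ) F3 (MvPolynomial.X 0)
def YY : F3 := algebraMap (MvPolynomial (Fin 3) ℤ) F3 (MvPolynomial.X 1)
def ZZ : F3 := algebraMap (MvPolynomial (Fin 3) ℤ) F3 (MvPolynomial.X 2)

/-- Recursive Gaussian binomial. -/
def gb {F : Type*} [CommRing F] (X : F) : ℕ → ℕ → F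
  | 0, 0 => 1
  | 0, _+1 => 0
  | _+1, 0 => 1
  | n+1, j+1 => X ^ (n - j) * gb X n j + gb X n (j+1)

variable {F : Type*} [CommRing F] (X : F)

lemma qPoch_succ (A : F) (k : ℕ) : qPoch A X (k+1) = qPoch A X k * (1 - A * X ^ k) :=
  Finset.prod_range_succ _ _

lemma qFact_succ (N : ℕ) : qFact X (N+1) = qFact X N * (1 - X ^ (N+1)) :=
  Finset.prod_range_succ _ _

lemma gb_zero_right (n : ℕ) : gb X n 0 = 1 := by cases n <;> rfl

lemma gb_of_lt : ∀ n j, n < j → gb X n j = 0 := by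
  intro n
  induction n with
  | zero => intro j hj; match j, hj with | k+1, _ => rfl
  | succ n ih =>
    intro j hj
    match j, hj with
    | k+1, hj =>
      show X ^ (n - k) * gb X n k + gb X n (k+1) = 0
      rw [ih k (by omega), ih (k+1) (by omega)]
      ring

lemma gb_diag : ∀ n, gb X n n = 1 := by
  intro n
  induction n with
  | zero => rfl
  | succ n ih =>
    show X ^ (n - n) * gb X n n + gb X n (n+1) = 1
    rw [ih, gb_of_lt X n (n+1) (by omega)]
    simp

lemma gb_mul_qFact : ∀ n j, j ≤ n → qFact X (n-j) * qFact X j * gb X n j = qFact X n := by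
  intro n
  induction n with
  | zero => intro j hj; interval_cases j; simp [qFact, gb]
  | succ n ih =>
    intro j hj
    match j with
    | 0 => simp [gb_zero_right, qFact]
    | i+1 =>
      have hi : i ≤ n := by omega
      rcases eq_or_lt_of_le hi with h | h
      · subst h
        show qFact X (i+1-(i+1)) * qFact X (i+1) * gb X (i+1) (i+1) = qFact X (i+1)
        rw [gb_diag, Nat.sub_self]
        simp [qFact]
      · -- i < n, so i+1 ≤ n
        have h1 := ih i hi
        have h2 := ih (i+1) h
        show qFact X (n+1-(i+1)) * qFact X (i+1) * (X ^ (n-i) * gb X n i + gb X n (i+1))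
            = qFact X (n+1)
        have e1 : n + 1 - (i+1) = n - i := by omega
        have e2 : n - i = (n - (i+1)) + 1 := by omega
        rw [e1, qFact_succ X n, e2, qFact_succ X (n - (i+1)), qFact_succ X i]
        have e3 : n - (i+1) + 1 = n - i := by omega
        have e4 : X ^ (n - i) * X ^ (i + 1) = X ^ (n+1) := by
          rw [← pow_add]; congr 1; omega
        rw [e3]
        rw [e2, qFact_succ X (n - (i+1)), e3] at h1
        rw [qFact_succ X i] at h2
        have e6 : X ^ (n - i) * X ^ i = X ^ n := by
          rw [← pow_add]; congr 1; omega
        linear_combination (X ^ (n-i) * (1 - X ^ (i+1))) * h1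
          + (1 - X ^ (n-i)) * h2 + qFact X n * e4 - 2 * X * qFact X n * e6

lemma key (Y Z : F) : ∀ n : ℕ, qPoch (Z * Y) X n
    = ∑ j ∈ Finset.range (n + 1), gb X n j * Z ^ j * qPoch Z X (n - j) * qPoch Y X j := by
  intro n
  induction n with
  | zero => simp [qPoch, gb]
  | succ n ih =>
    have hstep : qPoch (Z * Y) X (n+1)
        = ∑ j ∈ Finset.range (n+1),
            gb X n j * Z ^ j * qPoch Z X (n - j) * qPoch Y X j * (1 - Z * Y * X ^ n) := by
      rw [qPoch_succ, ih, ← Finset.sum_mul]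
    rw [hstep]
    rw [Finset.sum_range_succ'
      (fun j => gb X (n+1) j * Z ^ j * qPoch Z X (n+1-j) * qPoch Y X j)]
    -- expand f(i+1) using Pascal
    have hsplit : ∀ i ∈ Finset.range (n+1),
        gb X (n+1) (i+1) * Z ^ (i+1) * qPoch Z X (n+1-(i+1)) * qPoch Y X (i+1)
        = X ^ (n-i) * gb X n i * Z ^ (i+1) * qPoch Z X (n-i) * qPoch Y X (i+1)
          + gb X n (i+1) * Z ^ (i+1) * qPoch Z X (n-i) * qPoch Y X (i+1) := by
      intro i _
      have : gb X (n+1) (i+1) = X ^ (n-i) * gb X n i + gb X n (i+1) := rfl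
      rw [this, Nat.succ_sub_succ]
      ring
    rw [Finset.sum_congr rfl hsplit, Finset.sum_add_distrib]
    -- regroup second sum with the j=0 term
    have hC : (∑ i ∈ Finset.range (n+1),
          gb X n (i+1) * Z ^ (i+1) * qPoch Z X (n-i) * qPoch Y X (i+1))
        + gb X (n+1) 0 * Z ^ 0 * qPoch Z X (n+1-0) * qPoch Y X 0
        = ∑ j ∈ Finset.range (n+1),
            gb X n j * Z ^ j * qPoch Z X (n+1-j) * qPoch Y X j := by
      have := Finset.sum_range_succ'
        (fun j => gb X n j * Z ^ j * qPoch Z X (n+1-j) * qPoch Y X j) (n+1)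
      rw [Finset.sum_range_succ
        (fun j => gb X n j * Z ^ j * qPoch Z X (n+1-j) * qPoch Y X j) (n+1)] at this
      rw [gb_of_lt X n (n+1) (by omega)] at this
      simp only [Nat.succ_sub_succ] at this ⊢
      simp only [gb_zero_right, qPoch, Finset.prod_range_zero, pow_zero,
        Nat.sub_zero, one_mul, mul_one, zero_mul, add_zero] at this ⊢
      linear_combination -this
    rw [add_assoc, hC, ← Finset.sum_add_distrib]
    apply Finset.sum_congr rfl
    intro j hj
    have hjn : j ≤ n := by
      have := Finset.mem_range.mp hj; omega
    have hZp : qPoch Z X (n+1-j) = qPoch Z X (n-j) * (1 - Z * X ^ (n-j)) := by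
      rw [show n+1-j = (n-j)+1 by omega, qPoch_succ]
    have hYp : qPoch Y X (j+1) = qPoch Y X j * (1 - Y * X ^ j) := qPoch_succ X Y j
    have e6 : X ^ (n - j) * X ^ j = X ^ n := by
      rw [← pow_add]; congr 1; omega
    rw [hZp, hYp]
    linear_combination (gb X n j * Z ^ (j+1) * qPoch Z X (n-j) * qPoch Y X j * Y) * e6

lemma qBinom_eq_gb {K : Type*} [Field K] (X : K) (h : ∀ N, qFact X N ≠ 0)
    {n j : ℕ} (hj : j ≤ n) : qBinom X n j = gb X n j := by
  have hne : qFact X (n - j) * qFact X j ≠ 0 := mul_ne_zero (h _) (h _)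
  rw [qBinom, ← gb_mul_qFact X n j hj, mul_comm, mul_div_assoc, div_self hne, mul_one]


lemma qFact_XX_ne_zero : ∀ N, qFact XX N ≠ 0 := by
  intro N
  rw [qFact]
  apply Finset.prod_ne_zero_iff.mpr
  intro k _
  have h1 : (1 : F3) - XX ^ (k+1)
      = algebraMap (MvPolynomial (Fin 3) ℤ) F3 (1 - MvPolynomial.X 0 ^ (k+1)) := by
    simp [XX, map_sub, map_pow]
  rw [h1]
  intro hc
  have h2 : (1 - MvPolynomial.X 0 ^ (k+1) : MvPolynomial (Fin 3) ℤ) = 0 :=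
    IsFractionRing.injective (MvPolynomial (Fin 3) ℤ) F3 (by simpa using hc)
  have := congrArg (MvPolynomial.eval (fun _ => (0:ℤ))) h2
  simp at this

theorem q_binomial_theorem (n : ℕ) (hn : 1 ≤ n) :
    qPoch (ZZ * YY) XX n
      = ∑ j ∈ Finset.range (n + 1),
          qBinom XX n j * ZZ ^ j * qPoch ZZ XX (n - j) * qPoch YY XX j := by
  rw [key XX YY ZZ n]
  refine Finset.sum_congr rfl fun j hj => ?_
  have hjn : j ≤ n := by have := Finset.mem_range.mp hj; omega
  rw [qBinom_eq_gb XX qFact_XX_ne_zero hjn]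

end
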